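/- Let γ : ℤ → ℝ be a summable (absolutely summable) real sequence, f(ω) := (1/(2π)) ∑_{k∈ℤ} γ_k e^{-i k ω}, and 𝔉(λ) := ∫_0^λ f(ω) dω. Then Im 𝔉(λ) = 0 for every λ ∈ [0, π] if and only if γ_k = γ_{-k} for every k ∈ ℤ. -/

import Mathlib

open Real MeasureTheory

lemma intC (n : ℤ) : (∫ x in (0:ℝ)..π, Real.cos (n * x)) = if n = 0 then π else 0 := by
  rcases eq_or_ne n 0 with h | h
  · simp [h]
  · have hn : (n:ℝ) ≠ 0 := Int.cast_ne_zero.mpr h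
    rw [if_neg h, intervalIntegral.integral_comp_mul_left (fun x => Real.cos x) hn]
    simp [Real.sin_int_mul_pi]

lemma intS (k m : ℤ) (hm : 0 < m) :
    (∫ x in (0:ℝ)..π, Real.sin (k * x) * Real.sin (m * x)) =
      if k = m then π/2 else if k = -m then -π/2 else 0 := by
  have key : ∀ x : ℝ, Real.sin ((k:ℝ) * x) * Real.sin ((m:ℝ) * x)
      = (Real.cos (((k - m : ℤ):ℝ) * x) - Real.cos (((k + m : ℤ):ℝ) * x)) / 2 := by
    intro x
    have h1 := Real.two_mul_sin_mul_sin ((k:ℝ)*x) ((m:ℝ)*x)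
    have e1 : ((k - m : ℤ):ℝ) * x = (k:ℝ)*x - (m:ℝ)*x := by push_cast; ring
    have e2 : ((k + m : ℤ):ℝ) * x = (k:ℝ)*x + (m:ℝ)*x := by push_cast; ring
    rw [e1, e2]
    linarith
  simp_rw [key]
  have i1 : IntervalIntegrable (fun x => Real.cos (((k - m : ℤ):ℝ) * x)) volume 0 π :=
    (Real.continuous_cos.comp (continuous_const.mul continuous_id)).intervalIntegrable _ _
  have i2 : IntervalIntegrable (fun x => Real.cos (((k + m : ℤ):ℝ) * x)) volume 0 π :=
    (Real.continuous_cos.comp (continuous_const.mul continuous_id)).intervalIntegrable _ _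
  rw [intervalIntegral.integral_div, intervalIntegral.integral_sub i1 i2, intC, intC]
  rcases eq_or_ne k m with h | h
  · have h1 : k - m = 0 := by omega
    have h2 : k + m ≠ 0 := by omega
    have h3 : m ≠ 0 := by omega
    simp [h, h1, h2, h3]
  · rcases eq_or_ne k (-m) with h' | h'
    · have h1 : k - m ≠ 0 := by omega
      have h2 : k + m = 0 := by omega
      have h3 : -m - m ≠ 0 := by omega
      have h4 : ¬ (-m = m) := by omega
      simp [h, h', h1, h2, h3, h4]
    · have h1 : k - m ≠ 0 := by omega
      have h2 : k + m ≠ 0 := by omega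
      simp [h, h', h1, h2]

/-- For an absolutely summable real sequence `γ : ℤ → ℝ`,
`f ω = (1/(2π)) ∑_{k∈ℤ} γ k e^{-ikω}` and `𝔉 λ = ∫_0^λ f`, the imaginary part of `𝔉`
vanishes on `[0, π]` if and only if `γ k = γ (-k)` for all `k`. -/
theorem stmt2 (γ : ℤ → ℝ) (hγ : Summable fun k : ℤ => |γ k|)
    (f : ℝ → ℂ)
    (hf : ∀ ω : ℝ, f ω =
      (1 / (2 * π)) * ∑' k : ℤ, (γ k : ℂ) * Complex.exp (-Complex.I * ((k : ℤ) : ℂ) * (ω : ℂ)))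
    (𝔉 : ℝ → ℂ)
    (hF : ∀ lam : ℝ, 𝔉 lam = ∫ ω in (0 : ℝ)..lam, f ω) :
    (∀ lam ∈ Set.Icc (0 : ℝ) π, (𝔉 lam).im = 0) ↔ (∀ k : ℤ, γ k = γ (-k)) := by
  have hπ : (0:ℝ) < π := Real.pi_pos
  -- norms of the terms of the complex series
  have hnorm : ∀ (ω : ℝ) (k : ℤ),
      ‖(γ k : ℂ) * Complex.exp (-Complex.I * (k:ℂ) * (ω:ℂ))‖ = |γ k| := by
    intro ω k
    have hre : (-Complex.I * (k:ℂ) * (ω:ℂ)).re = 0 := by simp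
    rw [norm_mul, Complex.norm_exp, hre, Real.exp_zero,
      mul_one, Complex.norm_real, Real.norm_eq_abs]
  have hsummC : ∀ ω : ℝ,
      Summable fun k : ℤ => (γ k : ℂ) * Complex.exp (-Complex.I * (k:ℂ) * (ω:ℂ)) := by
    intro ω
    apply Summable.of_norm
    simpa only [hnorm ω] using hγ
  -- the real series h
  set g : ℤ → ℝ → ℝ := fun k ω => γ k * (-Real.sin ((k:ℝ) * ω)) with hg
  have hgbound : ∀ (k : ℤ) (ω : ℝ), ‖g k ω‖ ≤ |γ k| := by
    intro k ω
    have : |Real.sin ((k:ℝ)*ω)| ≤ 1 := abs_le.2 ⟨Real.neg_one_le_sin _, Real.sin_le_one _⟩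
    rw [Real.norm_eq_abs, hg]
    simp only [abs_mul, abs_neg]
    exact mul_le_of_le_one_right (abs_nonneg _) this
  have hgsumm : ∀ ω : ℝ, Summable fun k : ℤ => g k ω := fun ω =>
    Summable.of_norm (hγ.of_nonneg_of_le (fun k => norm_nonneg _) (fun k => hgbound k ω))
  set h : ℝ → ℝ := fun ω => ∑' k : ℤ, g k ω with hh
  have hcont : Continuous h := by
    apply continuous_tsum (fun k => ?_) hγ (fun k ω => hgbound k ω)
    exact continuous_const.mul ((Real.continuous_sin.comp (continuous_const.mul continuous_id)).neg)
  -- imaginary part of f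
  have hIm : ∀ ω : ℝ, (f ω).im = (1/(2*π)) * h ω := by
    intro ω
    rw [hf ω]
    have h1 : (1 / (2 * (π:ℂ))) = ((1 / (2*π) : ℝ) : ℂ) := by push_cast; ring
    rw [h1, Complex.mul_im]
    simp only [Complex.ofReal_re, Complex.ofReal_im, zero_mul, add_zero]
    congr 1
    have h2 : (∑' k : ℤ, (γ k : ℂ) * Complex.exp (-Complex.I * (k:ℂ) * (ω:ℂ))).im
        = ∑' k : ℤ, ((γ k : ℂ) * Complex.exp (-Complex.I * (k:ℂ) * (ω:ℂ))).im := by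
      simpa using (Complex.imCLM.map_tsum (hsummC ω))
    rw [h2]
    apply tsum_congr
    intro k
    have e : -Complex.I * (k:ℂ) * (ω:ℂ) = ((-((k:ℝ)*ω) : ℝ) : ℂ) * Complex.I := by
      push_cast; ring
    rw [e, Complex.mul_im]
    simp only [Complex.ofReal_re, Complex.ofReal_im, zero_mul, add_zero]
    rw [Complex.exp_ofReal_mul_I_im, Real.sin_neg]
  -- f continuous
  have hfc : Continuous f := by
    have hc2 : Continuous fun ω : ℝ =>
        ∑' k : ℤ, (γ k : ℂ) * Complex.exp (-Complex.I * (k:ℂ) * (ω:ℂ)) := by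
      apply continuous_tsum (fun k => ?_) hγ (fun k ω => le_of_eq (hnorm ω k))
      exact continuous_const.mul (Complex.continuous_exp.comp
        ((continuous_const.mul continuous_const).mul Complex.continuous_ofReal))
    have : f = fun ω : ℝ => (1 / (2 * (π:ℂ))) *
        ∑' k : ℤ, (γ k : ℂ) * Complex.exp (-Complex.I * (k:ℂ) * (ω:ℂ)) := funext hf
    rw [this]
    exact continuous_const.mul hc2
  -- imaginary part of 𝔉
  have hFim : ∀ lam : ℝ, (𝔉 lam).im = (1/(2*π)) * ∫ ω in (0:ℝ)..lam, h ω := by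
    intro lam
    rw [hF lam]
    have hint : IntervalIntegrable f volume 0 lam := hfc.intervalIntegrable _ _
    calc (∫ ω in (0:ℝ)..lam, f ω).im
        = ∫ ω in (0:ℝ)..lam, (f ω).im := by
          simpa using (Complex.imCLM.intervalIntegral_comp_comm hint).symm
      _ = ∫ ω in (0:ℝ)..lam, (1/(2*π)) * h ω := by simp_rw [hIm]
      _ = (1/(2*π)) * ∫ ω in (0:ℝ)..lam, h ω := intervalIntegral.integral_const_mul _ _
  constructor
  · -- hard direction
    intro hvan
    have hintH : ∀ lam ∈ Set.Icc (0:ℝ) π, (∫ ω in (0:ℝ)..lam, h ω) = 0 := by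
      intro lam hlam
      have h0 := hvan lam hlam
      rw [hFim lam] at h0
      have h2π : (1/(2*π)) ≠ 0 := by positivity
      exact (mul_eq_zero.mp h0).resolve_left h2π
    have hzero : ∀ x ∈ Set.Ioo (0:ℝ) π, h x = 0 := by
      intro x hx
      have hd : HasDerivAt (fun u => ∫ ω in (0:ℝ)..u, h ω) (h x) x :=
        intervalIntegral.integral_hasDerivAt_right (hcont.intervalIntegrable _ _)
          (hcont.stronglyMeasurable.stronglyMeasurableAtFilter) hcont.continuousAt
      have hev : (fun u => ∫ ω in (0:ℝ)..u, h ω) =ᶠ[nhds x] fun _ => (0:ℝ) := by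
        filter_upwards [Ioo_mem_nhds hx.1 hx.2] with y hy
        exact hintH y ⟨le_of_lt hy.1, le_of_lt hy.2⟩
      have hd0 : HasDerivAt (fun u => ∫ ω in (0:ℝ)..u, h ω) 0 x :=
        (hasDerivAt_const x (0:ℝ)).congr_of_eventuallyEq hev
      exact hd.unique hd0
    have hπ0 : h π = 0 := by
      have hmem : π ∈ closure (Set.Ioo (0:ℝ) π) := by
        rw [closure_Ioo hπ.ne]
        exact ⟨le_of_lt hπ, le_refl _⟩
      haveI := mem_closure_iff_nhdsWithin_neBot.mp hmem
      have h1 : Filter.Tendsto h (nhdsWithin π (Set.Ioo 0 π)) (nhds (h π)) :=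
        hcont.continuousAt.continuousWithinAt
      have h2 : Filter.Tendsto h (nhdsWithin π (Set.Ioo 0 π)) (nhds 0) := by
        apply Filter.Tendsto.congr' _ tendsto_const_nhds
        filter_upwards [self_mem_nhdsWithin] with y hy
        exact (hzero y hy).symm
      exact tendsto_nhds_unique h1 h2
    have hzero' : ∀ x ∈ Set.Ioc (0:ℝ) π, h x = 0 := by
      intro x hx
      rcases eq_or_lt_of_le hx.2 with h' | h'
      · rw [h']; exact hπ0
      · exact hzero x ⟨hx.1, h'⟩
    have key : ∀ m : ℤ, 0 < m → γ m = γ (-m) := by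
      intro m hm
      -- integrability of each term
      have hFk : ∀ k : ℤ, Integrable (fun x => g k x * Real.sin ((m:ℝ)*x))
          (volume.restrict (Set.Ioc (0:ℝ) π)) := by
        intro k
        apply Continuous.integrableOn_Ioc
        exact (continuous_const.mul ((Real.continuous_sin.comp
          (continuous_const.mul continuous_id)).neg)).mul
          (Real.continuous_sin.comp (continuous_const.mul continuous_id))
      have hbound2 : ∀ (k : ℤ) (x : ℝ), ‖g k x * Real.sin ((m:ℝ)*x)‖ ≤ |γ k| := by
        intro k x
        have hs : |Real.sin ((m:ℝ)*x)| ≤ 1 := abs_le.2 ⟨Real.neg_one_le_sin _, Real.sin_le_one _⟩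
        rw [norm_mul]
        calc ‖g k x‖ * ‖Real.sin ((m:ℝ)*x)‖ ≤ |γ k| * 1 := by
              apply mul_le_mul (hgbound k x) _ (norm_nonneg _) (abs_nonneg _)
              rw [Real.norm_eq_abs]; exact hs
          _ = |γ k| := mul_one _
      have hFsum : Summable fun k : ℤ =>
          ∫ x in Set.Ioc (0:ℝ) π, ‖g k x * Real.sin ((m:ℝ)*x)‖ := by
        apply hγ.mul_right π |>.of_nonneg_of_le
          (fun k => integral_nonneg (fun x => norm_nonneg _))
        intro k
        calc (∫ x in Set.Ioc (0:ℝ) π, ‖g k x * Real.sin ((m:ℝ)*x)‖)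
            ≤ ∫ _x in Set.Ioc (0:ℝ) π, |γ k| := by
              apply setIntegral_mono_on (hFk k).norm (integrableOn_const (by
                simp [Real.volume_Ioc])) measurableSet_Ioc
              intro x _
              exact hbound2 k x
          _ = |γ k| * π := by
              rw [setIntegral_const]
              simp [Real.volume_Ioc, ENNReal.toReal_ofReal (le_of_lt hπ)]
              rw [max_eq_left (le_of_lt hπ)]
              ring
      -- the swap
      have hswap : (∫ x in Set.Ioc (0:ℝ) π, h x * Real.sin ((m:ℝ)*x))
          = ∑' k : ℤ, ∫ x in Set.Ioc (0:ℝ) π, g k x * Real.sin ((m:ℝ)*x) := by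
        rw [MeasureTheory.integral_tsum_of_summable_integral_norm hFk hFsum]
        apply setIntegral_congr_fun measurableSet_Ioc
        intro x _
        exact (tsum_mul_right).symm
      -- LHS is zero
      have hLHS : (∫ x in Set.Ioc (0:ℝ) π, h x * Real.sin ((m:ℝ)*x)) = 0 := by
        apply setIntegral_eq_zero_of_forall_eq_zero
        intro x hx
        rw [hzero' x hx, zero_mul]
      -- compute each integral
      have hterm : ∀ k : ℤ, (∫ x in Set.Ioc (0:ℝ) π, g k x * Real.sin ((m:ℝ)*x))
          = -γ k * (if k = m then π/2 else if k = -m then -π/2 else 0) := by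
        intro k
        rw [← intervalIntegral.integral_of_le (le_of_lt hπ)]
        rw [← intS k m hm, ← intervalIntegral.integral_const_mul]
        apply intervalIntegral.integral_congr
        intro x _
        simp only [hg]
        ring
      rw [hLHS] at hswap
      simp_rw [hterm] at hswap
      have hne : m ≠ -m := by omega
      have hts : (∑' k : ℤ, -γ k * (if k = m then π/2 else if k = -m then -π/2 else 0))
          = -γ m * (π/2) + -γ (-m) * (-π/2) := by
        rw [tsum_eq_sum (s := {m, -m}) (by
          intro k hk
          simp only [Finset.mem_insert, Finset.mem_singleton] at hk
          push_neg at hk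
          rw [if_neg hk.1, if_neg hk.2, mul_zero])]
        rw [Finset.sum_pair hne]
        rw [if_pos rfl, if_neg (Ne.symm hne), if_pos rfl]
      rw [hts] at hswap
      have : (γ (-m) - γ m) * (π/2) = 0 := by linarith
      have hπ2 : (π/2 : ℝ) ≠ 0 := by positivity
      have := (mul_eq_zero.mp this).resolve_right hπ2
      linarith
    intro k
    rcases lt_trichotomy k 0 with hk | hk | hk
    · have := key (-k) (by omega)
      rw [neg_neg] at this
      exact this.symm
    · rw [hk]; norm_num
    · exact key k hk
  · -- easy direction
    intro hsym lam _
    have hh0 : ∀ ω : ℝ, h ω = 0 := by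
      intro ω
      have e : ∀ k : ℤ, g (-k) ω = -(g k ω) := by
        intro k
        simp only [hg]
        rw [← hsym k]
        push_cast
        rw [neg_mul, Real.sin_neg]
        ring
      have h2 : ∑' k : ℤ, g ((Equiv.neg ℤ) k) ω = ∑' k : ℤ, g k ω :=
        (Equiv.neg ℤ).tsum_eq (fun k => g k ω)
      have h3 : ∑' k : ℤ, g ((Equiv.neg ℤ) k) ω = -(∑' k : ℤ, g k ω) := by
        calc ∑' k : ℤ, g ((Equiv.neg ℤ) k) ω = ∑' k : ℤ, -(g k ω) := by
              apply tsum_congr; intro k; rw [Equiv.neg_apply]; exact e k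
          _ = -(∑' k : ℤ, g k ω) := tsum_neg
      rw [h2] at h3
      simp only [hh]
      linarith
    rw [hFim lam]
    have : (∫ ω in (0:ℝ)..lam, h ω) = 0 := by
      simp only [hh0]
      exact intervalIntegral.integral_zero
    rw [this, mul_zero]
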